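/- arXiv:1910.14543 — 3 statements merged into one kernel-verified Lean document; each statement's English description precedes it below -/
import Mathlib

section
/- Let W and r be symmetric n×n real matrices and a_1,...,a_n positive reals. Define v̄_{ij} = r_{ij}·(a_j - a_i)/(a_j + a_i) and the operator (T y)_i = Σ_j [r_{ij}(y_i - y_j) - v̄_{ij}(y_i + y_j)] w_{ij}. Then T is self-adjoint with respect to the inner product ⟨y,z⟩ = Σ_i a_i y_i z_i. -/
theorem stmt_1 (n : ℕ) (W r : Matrix (Fin n) (Fin n) ℝ) (hW : W.IsSymm) (hr : r.IsSymm)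
    (a : Fin n → ℝ) (ha : ∀ i, 0 < a i)
    (T : (Fin n → ℝ) → (Fin n → ℝ))
    (hT : ∀ y i, T y i =
      ∑ j, (r i j * (y i - y j) - (r i j * ((a j - a i) / (a j + a i))) * (y i + y j)) * W i j)
    (y z : Fin n → ℝ) :
    ∑ i, a i * T y i * z i = ∑ i, a i * y i * T z i := by
  simp only [hT, Finset.mul_sum, Finset.sum_mul]
  set F : Fin n → Fin n → ℝ := fun i j =>
    a i * ((r i j * (y i - y j) - (r i j * ((a j - a i) / (a j + a i))) * (y i + y j)) * W i j) * z i with hF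
  set G : Fin n → Fin n → ℝ := fun i j =>
    a i * y i * ((r i j * (z i - z j) - (r i j * ((a j - a i) / (a j + a i))) * (z i + z j)) * W i j) with hG
  show ∑ i, ∑ j, F i j = ∑ i, ∑ j, G i j
  have hGswap : ∑ i, ∑ j, G i j = ∑ i, ∑ j, G j i := Finset.sum_comm
  rw [hGswap]
  set H : Fin n → Fin n → ℝ := fun i j => F i j - G j i with hH
  have hanti : ∀ i j, H i j = - H j i := by
    intro i j
    have hij : a i + a j ≠ 0 := ne_of_gt (add_pos (ha i) (ha j))
    have hji : a j + a i ≠ 0 := ne_of_gt (add_pos (ha j) (ha i))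
    have hw : W j i = W i j := hW.apply i j
    have hrr : r j i = r i j := hr.apply i j
    simp only [hH, hF, hG, hw, hrr]
    field_simp
    ring
  have hzero : ∑ i, ∑ j, H i j = 0 := by
    have h1 : ∑ i, ∑ j, H i j = ∑ i, ∑ j, H j i := Finset.sum_comm
    have h2 : ∑ i : Fin n, ∑ j : Fin n, H j i = - ∑ i, ∑ j, H i j := by
      rw [← Finset.sum_neg_distrib]
      refine Finset.sum_congr rfl fun i _ => ?_
      rw [← Finset.sum_neg_distrib]
      exact Finset.sum_congr rfl fun j _ => by rw [hanti j i]
    linarith [h1, h2]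
  have : ∑ i, ∑ j, F i j - ∑ i, ∑ j, G j i = 0 := by
    rw [← Finset.sum_sub_distrib]
    simp_rw [← Finset.sum_sub_distrib]
    exact hzero
  linarith [this]
end

section
/- Let w̃ be a symmetric n×n real matrix with nonnegative entries, a_i > 0, c > 0, and let D be a diagonal matrix with strictly positive diagonal entries d_i. Define (T y)_i = Σ_j (a_i y_i - a_j y_j) w̃_{ij}. Then the operator D^{-1/2} T D^{-1/2} is self-adjoint and positive semi-definite with respect to the inner product ⟨u,v⟩_X = Σ_i c a_i u_i v_i. -/
lemma key_sym (n : ℕ) (w : Matrix (Fin n) (Fin n) ℝ) (hw : w.IsSymm)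
    (f g : Fin n → ℝ) :
    ∑ i, ∑ j, g i * (f i - f j) * w i j
      = (1/2) * ∑ i, ∑ j, (g i - g j) * (f i - f j) * w i j := by
  have h1 : ∑ i, ∑ j, g i * (f i - f j) * w i j
      = ∑ i, ∑ j, g j * (f j - f i) * w i j := by
    rw [Finset.sum_comm]
    exact Finset.sum_congr rfl fun i _ => Finset.sum_congr rfl fun j _ => by
      rw [hw.apply i j]
  have h2 : (2:ℝ) * ∑ i, ∑ j, g i * (f i - f j) * w i j
      = ∑ i, ∑ j, (g i - g j) * (f i - f j) * w i j := by
    calc (2:ℝ) * ∑ i, ∑ j, g i * (f i - f j) * w i j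
        = (∑ i, ∑ j, g i * (f i - f j) * w i j)
          + ∑ i, ∑ j, g j * (f j - f i) * w i j := by rw [← h1]; ring
      _ = ∑ i, ∑ j, (g i * (f i - f j) * w i j + g j * (f j - f i) * w i j) := by
          rw [← Finset.sum_add_distrib]
          exact Finset.sum_congr rfl fun i _ => (Finset.sum_add_distrib).symm
      _ = ∑ i, ∑ j, (g i - g j) * (f i - f j) * w i j :=
          Finset.sum_congr rfl fun i _ => Finset.sum_congr rfl fun j _ => by ring
  linarith [h2]

theorem stmt_5 (n : ℕ) (w : Matrix (Fin n) (Fin n) ℝ) (hw : w.IsSymm)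
    (hw0 : ∀ i j, 0 ≤ w i j)
    (a : Fin n → ℝ) (ha : ∀ i, 0 < a i) (c : ℝ) (hc : 0 < c)
    (d : Fin n → ℝ) (hd : ∀ i, 0 < d i)
    (T : (Fin n → ℝ) → (Fin n → ℝ))
    (hT : ∀ y i, T y i = ∑ j, (a i * y i - a j * y j) * w i j)
    (S : (Fin n → ℝ) → (Fin n → ℝ))
    (hS : ∀ y i, S y i = (Real.sqrt (d i))⁻¹ * T (fun j => (Real.sqrt (d j))⁻¹ * y j) i) :
    (∀ y z : Fin n → ℝ, ∑ i, c * a i * S y i * z i = ∑ i, c * a i * y i * S z i) ∧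
    (∀ y : Fin n → ℝ, 0 ≤ ∑ i, c * a i * y i * S y i) := by
  set F : (Fin n → ℝ) → Fin n → ℝ :=
    fun y i => a i * ((Real.sqrt (d i))⁻¹ * y i) with hF
  have expand : ∀ y z : Fin n → ℝ, ∑ i, c * a i * S y i * z i
      = c * ∑ i, ∑ j, (F z) i * ((F y) i - (F y) j) * w i j := by
    intro y z
    rw [Finset.mul_sum]
    refine Finset.sum_congr rfl fun i _ => ?_
    rw [hS, hT]
    simp only [Finset.mul_sum, Finset.sum_mul]
    refine Finset.sum_congr rfl fun j _ => ?_
    simp only [hF]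
    ring
  have main : ∀ y z : Fin n → ℝ, ∑ i, c * a i * S y i * z i
      = c * ((1/2) * ∑ i, ∑ j, ((F z) i - (F z) j) * ((F y) i - (F y) j) * w i j) := by
    intro y z
    rw [expand y z, key_sym n w hw (F y) (F z)]
  constructor
  · intro y z
    have hzy : ∑ i, c * a i * y i * S z i = ∑ i, c * a i * S z i * y i :=
      Finset.sum_congr rfl fun i _ => by ring
    rw [hzy, main y z, main z y]
    congr 2
    refine Finset.sum_congr rfl fun i _ => Finset.sum_congr rfl fun j _ => ?_
    ring
  · intro y
    have hyy : ∑ i, c * a i * y i * S y i = ∑ i, c * a i * S y i * y i :=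
      Finset.sum_congr rfl fun i _ => by ring
    rw [hyy, main y y]
    have : 0 ≤ ∑ i, ∑ j, ((F y) i - (F y) j) * ((F y) i - (F y) j) * w i j := by
      refine Finset.sum_nonneg fun i _ => Finset.sum_nonneg fun j _ => ?_
      exact mul_nonneg (mul_self_nonneg _) (hw0 i j)
    positivity
end

section
/- Let a : Fin n → ℝ (n ≥ 3) be a function taking at most two distinct values. Then for every cyclic sequence of indices i_1, i_2, ..., i_l, i_1 (with l ≥ 3), one has ∏_{k=1}^{l} (1 + a_{i_k} − a_{i_{k+1}}) = ∏_{k=1}^{l} (1 + a_{i_{k+1}} − a_{i_k}), where indices are taken cyclically (i_{l+1} = i_1). -/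
open Finset

lemma key_prod (l : ℕ) (b : Fin l → ℝ) (d : ℝ) (hd : d ≠ 0)
    (hb : ∀ k, b k = 0 ∨ b k = d ∨ b k = -d) (hsum : ∑ k, b k = 0) :
    ∏ k, (1 + b k) = ∏ k, (1 - b k) := by
  classical
  set P := univ.filter (fun k : Fin l => b k = d) with hP
  set Q := univ.filter (fun k : Fin l => b k = -d) with hQ
  have hPQ : ∀ k, k ∉ P → k ∉ Q → b k = 0 := by
    intro k h1 h2
    simp [hP, hQ] at h1 h2
    rcases hb k with h | h | h <;> tauto
  have hdd : d ≠ -d := by intro h; apply hd; linarith [h]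
  have hsum' : (P.card : ℝ) * d - (Q.card : ℝ) * d = 0 := by
    have : ∑ k, b k = ∑ k ∈ P, b k + ∑ k ∈ Q, b k + ∑ k ∈ (univ \ (P ∪ Q)), b k := by
      rw [← Finset.sum_union, ← Finset.sum_union]
      · congr 1
        rw [Finset.union_sdiff_of_subset (Finset.subset_univ _)]
      · exact Finset.disjoint_sdiff
      · rw [Finset.disjoint_filter]
        intro k _ h1 h2
        exact hdd (h1 ▸ h2)
    rw [this] at hsum
    have e1 : ∑ k ∈ P, b k = (P.card : ℝ) * d := by
      rw [Finset.sum_congr rfl (fun k hk => by simp [hP] at hk; exact hk)]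
      simp [mul_comm]
    have e2 : ∑ k ∈ Q, b k = -((Q.card : ℝ) * d) := by
      rw [Finset.sum_congr rfl (fun k hk => by simp [hQ] at hk; exact hk)]
      simp [mul_comm]
    have e3 : ∑ k ∈ (univ \ (P ∪ Q)), b k = 0 := by
      apply Finset.sum_eq_zero
      intro k hk
      simp only [Finset.mem_sdiff, Finset.mem_union] at hk
      exact hPQ k (fun h => hk.2 (Or.inl h)) (fun h => hk.2 (Or.inr h))
    rw [e1, e2, e3] at hsum
    linarith
  have hcard : (P.card : ℝ) = Q.card := by
    have := mul_right_cancel₀ hd (by linarith : (P.card : ℝ) * d = (Q.card : ℝ) * d)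
    exact this
  have split : ∀ f : Fin l → ℝ, ∏ k, f k =
      (∏ k ∈ P, f k) * (∏ k ∈ Q, f k) * ∏ k ∈ (univ \ (P ∪ Q)), f k := by
    intro f
    rw [← Finset.prod_union, ← Finset.prod_union]
    · congr 1
      rw [Finset.union_sdiff_of_subset (Finset.subset_univ _)]
    · exact Finset.disjoint_sdiff
    · rw [Finset.disjoint_filter]
      intro k _ h1 h2
      exact hdd (h1 ▸ h2)
  rw [split, split]
  have pP1 : ∏ k ∈ P, (1 + b k) = (1 + d) ^ P.card := by
    rw [Finset.prod_congr rfl (fun k hk => by simp [hP] at hk; rw [hk]), Finset.prod_const]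
  have pQ1 : ∏ k ∈ Q, (1 + b k) = (1 - d) ^ Q.card := by
    rw [Finset.prod_congr rfl (fun k hk => by simp [hQ] at hk; rw [hk]), Finset.prod_const]
    ring_nf
  have pP2 : ∏ k ∈ P, (1 - b k) = (1 - d) ^ P.card := by
    rw [Finset.prod_congr rfl (fun k hk => by simp [hP] at hk; rw [hk]), Finset.prod_const]
  have pQ2 : ∏ k ∈ Q, (1 - b k) = (1 + d) ^ Q.card := by
    rw [Finset.prod_congr rfl (fun k hk => by simp [hQ] at hk; rw [hk]), Finset.prod_const]
    ring_nf
  have pZ1 : ∏ k ∈ (univ \ (P ∪ Q)), (1 + b k) = 1 := by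
    apply Finset.prod_eq_one; intro k hk
    simp only [Finset.mem_sdiff, Finset.mem_union] at hk
    rw [hPQ k (fun h => hk.2 (Or.inl h)) (fun h => hk.2 (Or.inr h))]; ring
  have pZ2 : ∏ k ∈ (univ \ (P ∪ Q)), (1 - b k) = 1 := by
    apply Finset.prod_eq_one; intro k hk
    simp only [Finset.mem_sdiff, Finset.mem_union] at hk
    rw [hPQ k (fun h => hk.2 (Or.inl h)) (fun h => hk.2 (Or.inr h))]; ring
  have hc : P.card = Q.card := Nat.cast_injective hcard
  rw [pP1, pQ1, pP2, pQ2, pZ1, pZ2, hc]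
  ring

theorem stmt_9 (n : ℕ) (hn : 3 ≤ n) (a : Fin n → ℝ)
    (ha : (Finset.univ.image a).card ≤ 2)
    (l : ℕ) (hl : 3 ≤ l) (idx : Fin l → Fin n) :
    ∏ k : Fin l, (1 + a (idx k) - a (idx (k + ⟨1, by omega⟩)))
      = ∏ k : Fin l, (1 + a (idx (k + ⟨1, by omega⟩)) - a (idx k)) := by
  classical
  haveI : NeZero l := ⟨by omega⟩
  set one : Fin l := ⟨1, by omega⟩ with hone
  set b : Fin l → ℝ := fun k => a (idx (k + one)) - a (idx k) with hbdef
  have hsum : ∑ k, b k = 0 := by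
    have : ∑ k, a (idx (k + one)) = ∑ k, a (idx k) :=
      Fintype.sum_equiv (Equiv.addRight one) _ _ (fun k => rfl)
    simp only [hbdef, Finset.sum_sub_distrib, this, sub_self]
  have hform1 : ∀ k, 1 + a (idx k) - a (idx (k + one)) = 1 - b k := by
    intro k; simp [hbdef]; ring
  have hform2 : ∀ k, 1 + a (idx (k + one)) - a (idx k) = 1 + b k := by
    intro k; simp [hbdef]; ring
  simp only [hform1, hform2]
  by_cases hconst : ∀ i j : Fin n, a i = a j
  · have hb0 : ∀ k, b k = 0 := fun k => by simp [hbdef, hconst (idx (k + one)) (idx k)]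
    simp [hb0]
  · push_neg at hconst
    obtain ⟨i0, i1, hne⟩ := hconst
    set d : ℝ := a i1 - a i0 with hd
    have hd0 : d ≠ 0 := by simp [hd]; exact sub_ne_zero_of_ne (Ne.symm hne)
    have htwo : ∀ i : Fin n, a i = a i0 ∨ a i = a i1 := by
      intro i
      by_contra h
      push_neg at h
      have hsub : ({a i0, a i1, a i} : Finset ℝ) ⊆ Finset.univ.image a := by
        intro x hx
        simp only [Finset.mem_insert, Finset.mem_singleton] at hx
        rcases hx with rfl | rfl | rfl <;> exact Finset.mem_image_of_mem a (Finset.mem_univ _)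
      have hc3 : ({a i0, a i1, a i} : Finset ℝ).card = 3 := by
        rw [Finset.card_insert_of_notMem, Finset.card_insert_of_notMem]
        · simp
        · simp [Ne.symm h.2]
        · simp only [Finset.mem_insert, Finset.mem_singleton]
          push_neg
          exact ⟨hne, Ne.symm h.1⟩
      have := Finset.card_le_card hsub
      omega
    have hb : ∀ k, b k = 0 ∨ b k = d ∨ b k = -d := by
      intro k
      rcases htwo (idx (k + one)) with h1 | h1 <;> rcases htwo (idx k) with h2 | h2 <;>
        simp [hbdef, h1, h2, hd] <;> ring_nf <;> tauto
    exact (key_prod l b d hd0 hb hsum).symm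
end
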